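/- For every natural number n there exists u > g/2 such that for every ε ∈ (g/2, u), the intersection (S_1 F)_ε ∩ (S_2 F)_ε has at least n connected components (equivalently, it contains n points that pairwise lie in different connected components of the intersection). In particular, the number of connected components of (S_1 F)_ε ∩ (S_2 F)_ε is unbounded as ε decreases to g/2. -/

import Mathlib

open Set Metric

/-- The Cantor square `F = C × C ⊆ ℝ²`. -/
def cantorSquare (C : Set ℝ) : Set (EuclideanSpace ℝ (Fin 2)) :=
  {v | v 0 ∈ C ∧ v 1 ∈ C}

/-- The map `S₁(v) = p·v` on ℝ². -/
noncomputable def cantorS₁ (p : ℝ) (v : EuclideanSpace ℝ (Fin 2)) :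
    EuclideanSpace ℝ (Fin 2) := p • v

/-- The map `S₂(v) = p·v + (1−p, 0)` on ℝ². -/
noncomputable def cantorS₂ (p : ℝ) (v : EuclideanSpace ℝ (Fin 2)) :
    EuclideanSpace ℝ (Fin 2) := p • v + EuclideanSpace.single 0 (1 - p)

namespace CantorAux

/-- Make a point of the Euclidean plane from two coordinates. -/
noncomputable def mk2 (a b : ℝ) : EuclideanSpace ℝ (Fin 2) :=
  (WithLp.equiv 2 (Fin 2 → ℝ)).symm ![a, b]

@[simp] lemma mk2_apply0 (a b : ℝ) : mk2 a b 0 = a := rfl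
@[simp] lemma mk2_apply1 (a b : ℝ) : mk2 a b 1 = b := rfl

lemma dist_mk2 (z w : EuclideanSpace ℝ (Fin 2)) :
    dist z w = Real.sqrt ((z 0 - w 0) ^ 2 + (z 1 - w 1) ^ 2) := by
  rw [EuclideanSpace.dist_eq, Fin.sum_univ_two, Real.dist_eq, Real.dist_eq,
    sq_abs, sq_abs]

lemma sq_dist_mk2 (z w : EuclideanSpace ℝ (Fin 2)) :
    dist z w ^ 2 = (z 0 - w 0) ^ 2 + (z 1 - w 1) ^ 2 := by
  rw [dist_mk2, Real.sq_sqrt (by positivity)]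

variable {p : ℝ} {C : Set ℝ}

lemma cantor_basic (hp : p ∈ Set.Ioo (0 : ℝ) (1 / 2))
    (hCne : C.Nonempty) (hCcpt : IsCompact C)
    (hC : C = (fun x => p * x) '' C ∪ (fun x => p * x + (1 - p)) '' C) :
    C ⊆ Set.Icc 0 1 ∧ (1 : ℝ) ∈ C ∧ (0 : ℝ) ∈ C := by
  obtain ⟨hp0, hp2⟩ := hp
  have hp2' : p < 1 / 2 := hp2
  set M := sSup C with hMdef
  set m := sInf C with hmdef
  have hMmem : M ∈ C := hCcpt.sSup_mem hCne
  have hmmem : m ∈ C := hCcpt.sInf_mem hCne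
  have hle : ∀ x ∈ C, x ≤ M := fun x hx => le_csSup hCcpt.bddAbove hx
  have hge : ∀ x ∈ C, m ≤ x := fun x hx => csInf_le hCcpt.bddBelow hx
  have hub : M ≤ p * M + (1 - p) := by
    refine csSup_le hCne ?_
    intro x hx
    rw [hC] at hx
    rcases hx with ⟨y, hy, rfl⟩ | ⟨y, hy, rfl⟩
    · dsimp only; nlinarith [hle y hy]
    · dsimp only; nlinarith [hle y hy]
  have hlb : p * m ≤ m := by
    refine le_csInf hCne fun x hx => ?_
    rw [hC] at hx
    rcases hx with ⟨y, hy, rfl⟩ | ⟨y, hy, rfl⟩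
    · dsimp only; nlinarith [hge y hy]
    · dsimp only; nlinarith [hge y hy]
  have hM1 : M ≤ 1 := by nlinarith
  have hm0 : 0 ≤ m := by nlinarith
  have hf2M : p * M + (1 - p) ∈ C := by
    rw [hC]; exact Or.inr ⟨M, hMmem, rfl⟩
  have h1M : 1 ≤ M := by nlinarith [hle _ hf2M]
  have hf1m : p * m ∈ C := by
    rw [hC]; exact Or.inl ⟨m, hmmem, rfl⟩
  have hm0' : m ≤ 0 := by nlinarith [hge _ hf1m]
  have hM : M = 1 := le_antisymm hM1 h1M
  have hm : m = 0 := le_antisymm hm0' hm0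
  exact ⟨fun x hx => ⟨hm ▸ hge x hx, hM ▸ hle x hx⟩, hM ▸ hMmem, hm ▸ hmmem⟩

lemma cantor_gap (hp : p ∈ Set.Ioo (0 : ℝ) (1 / 2))
    (hCne : C.Nonempty) (hCcpt : IsCompact C)
    (hC : C = (fun x => p * x) '' C ∪ (fun x => p * x + (1 - p)) '' C) :
    ∀ i : ℕ, ∀ x ∈ C, ¬ (1 - p ^ i + p ^ (i + 1) < x ∧ x < 1 - p ^ (i + 1)) := by
  obtain ⟨hsub, -, -⟩ := cantor_basic hp hCne hCcpt hC
  obtain ⟨hp0, hp2⟩ := hp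
  intro i
  induction i with
  | zero =>
    rintro x hx ⟨h1, h2⟩
    rw [hC] at hx
    rcases hx with ⟨y, hy, rfl⟩ | ⟨y, hy, rfl⟩
    · have := (hsub hy).2
      dsimp only at h1 h2
      norm_num at h1
      nlinarith [mul_nonneg (by linarith : (0:ℝ) ≤ 1 - y) hp0.le]
    · have := (hsub hy).1
      dsimp only at h1 h2
      norm_num at h2
      nlinarith [mul_nonneg hp0.le (by linarith : (0:ℝ) ≤ y)]
  | succ i ih =>
    rintro x hx ⟨h1, h2⟩
    rw [hC] at hx
    have e1 : p ^ (i + 1) = p ^ i * p := pow_succ p i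
    have e2 : p ^ (i + 2) = p ^ i * p * p := by ring
    have hpi : 0 < p ^ i := pow_pos hp0 i
    have hpile : p ^ i ≤ 1 := pow_le_one₀ hp0.le (by linarith)
    rcases hx with ⟨y, hy, rfl⟩ | ⟨y, hy, rfl⟩
    · have := (hsub hy).2
      dsimp only at h1 h2
      simp only [show i+1+1 = i+2 from rfl, e1, e2] at h1
      nlinarith [mul_nonneg (by linarith : (0:ℝ) ≤ 1 - y) hp0.le,
        mul_nonneg (by linarith : (0:ℝ) ≤ 1 - p ^ i)
          (by nlinarith : (0:ℝ) ≤ p * (1 - p)), sq_nonneg (1 - p)]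
    · dsimp only at h1 h2
      simp only [show i+1+1 = i+2 from rfl, e1, e2] at h1 h2
      refine ih y hy ⟨?_, ?_⟩
      · have : p * (1 - p ^ i + p ^ (i + 1)) < p * y := by
          simp only [e1, e2] at h1 ⊢; nlinarith
        exact lt_of_mul_lt_mul_left this hp0.le
      · have : p * y < p * (1 - p ^ (i + 1)) := by
          simp only [e1, e2] at h2 ⊢; nlinarith
        exact lt_of_mul_lt_mul_left this hp0.le

lemma cantor_pts (hp : p ∈ Set.Ioo (0 : ℝ) (1 / 2))
    (hCne : C.Nonempty) (hCcpt : IsCompact C)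
    (hC : C = (fun x => p * x) '' C ∪ (fun x => p * x + (1 - p)) '' C) :
    ∀ i : ℕ, 1 - p ^ i ∈ C := by
  obtain ⟨-, -, h0⟩ := cantor_basic hp hCne hCcpt hC
  intro i
  induction i with
  | zero => simpa using h0
  | succ i ih =>
    have : p * (1 - p ^ i) + (1 - p) ∈ C := by
      rw [hC]; exact Or.inr ⟨_, ih, rfl⟩
    have e : p * (1 - p ^ i) + (1 - p) = 1 - p ^ (i + 1) := by ring
    rwa [e] at this

end CantorAux

open CantorAux in
set_option maxHeartbeats 1000000 in
/-- For every `n` there is `u > g/2` such that for every `ε ∈ (g/2, u)` the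
intersection `(S₁F)_ε ∩ (S₂F)_ε` contains `n` points lying pairwise in different
connected components; in particular the number of connected components of the
intersection is unbounded as `ε ↘ g/2`. -/
theorem stmt13 (p : ℝ) (hp : p ∈ Set.Ioo (0 : ℝ) (1 / 2))
    (C : Set ℝ) (hCne : C.Nonempty) (hCcpt : IsCompact C)
    (hC : C = (fun x => p * x) '' C ∪ (fun x => p * x + (1 - p)) '' C)
    (n : ℕ) :
    ∃ u : ℝ, (1 - 2 * p) / 2 < u ∧
      ∀ ε ∈ Set.Ioo ((1 - 2 * p) / 2) u,
        ∃ pts : Fin n → EuclideanSpace ℝ (Fin 2),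
          (∀ i, pts i ∈ cthickening ε (cantorS₁ p '' cantorSquare C) ∩
              cthickening ε (cantorS₂ p '' cantorSquare C)) ∧
          ∀ i j, i ≠ j →
            connectedComponentIn
              (cthickening ε (cantorS₁ p '' cantorSquare C) ∩
                cthickening ε (cantorS₂ p '' cantorSquare C)) (pts i) ≠
            connectedComponentIn
              (cthickening ε (cantorS₁ p '' cantorSquare C) ∩
                cthickening ε (cantorS₂ p '' cantorSquare C)) (pts j) := by
  obtain ⟨hsub, h1C, h0C⟩ := cantor_basic hp hCne hCcpt hC
  obtain ⟨hp0, hp2⟩ := hp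
  have hg0 : 0 < 1 - 2 * p := by linarith
  set g : ℝ := 1 - 2 * p with hgdef
  set β : ℝ := p ^ n * g / 2 with hβdef
  have hβ0 : 0 < β := by positivity
  -- the copies
  set A₁ : Set (EuclideanSpace ℝ (Fin 2)) := cantorS₁ p '' cantorSquare C with hA₁
  set A₂ : Set (EuclideanSpace ℝ (Fin 2)) := cantorS₂ p '' cantorSquare C with hA₂
  set D : Set ℝ := (fun x => p * x) '' C with hD
  have hDne : D.Nonempty := hCne.image _
  -- coordinates of maps
  have hS₁0 : ∀ v, cantorS₁ p v 0 = p * v 0 := fun v => rfl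
  have hS₁1 : ∀ v, cantorS₁ p v 1 = p * v 1 := fun v => rfl
  have hS₂0 : ∀ v, cantorS₂ p v 0 = p * v 0 + (1 - p) := by
    intro v
    show p * v 0 + EuclideanSpace.single (0 : Fin 2) (1 - p) 0 = _
    simp [EuclideanSpace.single_apply]
  have hS₂1 : ∀ v, cantorS₂ p v 1 = p * v 1 := by
    intro v
    show p * v 1 + EuclideanSpace.single (0 : Fin 2) (1 - p) 1 = _
    simp [EuclideanSpace.single_apply]
  -- key upper bound for points in the intersection
  have key : ∀ ε : ℝ, 0 ≤ ε → ∀ z ∈ cthickening ε A₁ ∩ cthickening ε A₂,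
      infDist (z 1) D ^ 2 + (g / 2) ^ 2 ≤ ε ^ 2 := by
    intro ε hε z ⟨hz1, hz2⟩
    rw [mem_cthickening_iff] at hz1 hz2
    -- compactness of the two copies
    have hFcpt : IsCompact (cantorSquare C) := by
      have himg : cantorSquare C = (fun q : ℝ × ℝ => mk2 q.1 q.2) '' (C ×ˢ C) := by
        ext v
        constructor
        · rintro ⟨hv0, hv1⟩
          refine ⟨(v 0, v 1), ⟨hv0, hv1⟩, ?_⟩
          ext i; fin_cases i <;> rfl
        · rintro ⟨⟨a, b⟩, ⟨ha, hb⟩, rfl⟩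
          exact ⟨ha, hb⟩
      rw [himg]
      refine (hCcpt.prod hCcpt).image ?_
      have : Continuous fun q : ℝ × ℝ => (![q.1, q.2] : Fin 2 → ℝ) := by
        refine continuous_pi fun i => ?_
        fin_cases i
        · exact continuous_fst
        · exact continuous_snd
      exact (PiLp.continuous_toLp 2 (fun _ : Fin 2 => ℝ)).comp this
    have hA₁cpt : IsCompact A₁ := hFcpt.image (continuous_const_smul p)
    have hA₂cpt : IsCompact A₂ := by
      refine hFcpt.image ?_
      exact (continuous_const_smul p).add continuous_const
    have hFne : (cantorSquare C).Nonempty := ⟨mk2 0 0, h0C, h0C⟩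
    obtain ⟨w₁, hw₁, hdw₁⟩ := hA₁cpt.exists_infDist_eq_dist (hFne.image _) z
    obtain ⟨w₂, hw₂, hdw₂⟩ := hA₂cpt.exists_infDist_eq_dist (hFne.image _) z
    have hd₁ : dist z w₁ ≤ ε := by
      rw [← hdw₁]
      have := ENNReal.toReal_mono ENNReal.ofReal_ne_top hz1
      rwa [ENNReal.toReal_ofReal hε] at this
    have hd₂ : dist z w₂ ≤ ε := by
      rw [← hdw₂]
      have := ENNReal.toReal_mono ENNReal.ofReal_ne_top hz2
      rwa [ENNReal.toReal_ofReal hε] at this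
    obtain ⟨v₁, hv₁, rfl⟩ := hw₁
    obtain ⟨v₂, hv₂, rfl⟩ := hw₂
    have hw₁0 : cantorS₁ p v₁ 0 ≤ p := by
      rw [hS₁0]; nlinarith [(hsub hv₁.1).2, (hsub hv₁.1).1]
    have hw₁0' : 0 ≤ cantorS₁ p v₁ 0 := by
      rw [hS₁0]; nlinarith [(hsub hv₁.1).1]
    have hw₂0 : 1 - p ≤ cantorS₂ p v₂ 0 := by
      rw [hS₂0]; nlinarith [(hsub hv₂.1).1]
    have hdD₁ : infDist (z 1) D ≤ |z 1 - cantorS₁ p v₁ 1| := by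
      have : cantorS₁ p v₁ 1 ∈ D := ⟨v₁ 1, hv₁.2, (hS₁1 v₁).symm⟩
      simpa [Real.dist_eq] using infDist_le_dist_of_mem this
    have hdD₂ : infDist (z 1) D ≤ |z 1 - cantorS₂ p v₂ 1| := by
      have : cantorS₂ p v₂ 1 ∈ D := ⟨v₂ 1, hv₂.2, (hS₂1 v₂).symm⟩
      simpa [Real.dist_eq] using infDist_le_dist_of_mem this
    set d : ℝ := infDist (z 1) D with hd
    have hd0 : 0 ≤ d := infDist_nonneg
    set a : ℝ := z 0 - cantorS₁ p v₁ 0 with ha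
    set b : ℝ := z 0 - cantorS₂ p v₂ 0 with hb
    have hsq₁ : a ^ 2 + d ^ 2 ≤ ε ^ 2 := by
      have h := sq_dist_mk2 z (cantorS₁ p v₁)
      have h2 : dist z (cantorS₁ p v₁) ^ 2 ≤ ε ^ 2 := by
        apply sq_le_sq' _ hd₁
        linarith [dist_nonneg (x := z) (y := cantorS₁ p v₁)]
      have h3 : d ^ 2 ≤ (z 1 - cantorS₁ p v₁ 1) ^ 2 := by
        rw [← sq_abs (z 1 - _)]
        exact pow_le_pow_left₀ hd0 hdD₁ 2
      have h2' := h ▸ h2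
      rw [ha]
      linarith [h2', h3]
    have hsq₂ : b ^ 2 + d ^ 2 ≤ ε ^ 2 := by
      have h := sq_dist_mk2 z (cantorS₂ p v₂)
      have h2 : dist z (cantorS₂ p v₂) ^ 2 ≤ ε ^ 2 := by
        apply sq_le_sq' _ hd₂
        linarith [dist_nonneg (x := z) (y := cantorS₂ p v₂)]
      have h3 : d ^ 2 ≤ (z 1 - cantorS₂ p v₂ 1) ^ 2 := by
        rw [← sq_abs (z 1 - _)]
        exact pow_le_pow_left₀ hd0 hdD₂ 2
      have h2' := h ▸ h2
      rw [hb]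
      linarith [h2', h3]
    -- combine
    have hab : g ≤ a - b := by rw [ha, hb, hgdef]; linarith
    nlinarith [hsq₁, hsq₂, sq_nonneg (a + b),
      mul_nonneg (by linarith : (0:ℝ) ≤ a - b - g) (by linarith : (0:ℝ) ≤ a - b + g)]
  -- lower bound at gap midpoints
  have sep : ∀ i : ℕ, i < n →
      β ≤ infDist (p * ((1 - p ^ i + p ^ (i + 1) + (1 - p ^ (i + 1))) / 2)) D := by
    intro i hi
    by_contra h
    push_neg at h
    obtain ⟨y, hy, hdist⟩ := (infDist_lt_iff hDne).mp h
    obtain ⟨x, hx, rfl⟩ := hy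
    have hgap := cantor_gap ⟨hp0, hp2⟩ hCne hCcpt hC i x hx
    have hxcase : x ≤ 1 - p ^ i + p ^ (i + 1) ∨ 1 - p ^ (i + 1) ≤ x := by
      by_contra hcon
      push_neg at hcon
      exact hgap ⟨hcon.1, hcon.2⟩
    rw [Real.dist_eq] at hdist
    have hpn : p ^ n ≤ p ^ (i + 1) := pow_le_pow_of_le_one hp0.le (by linarith) hi
    have hpi1 : 0 < p ^ (i + 1) := pow_pos hp0 _
    have hβle : β ≤ p * (p ^ i * g) / 2 := by
      rw [hβdef]
      have : p ^ (i + 1) = p * p ^ i := by ring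
      nlinarith
    rcases hxcase with hle | hge
    · have : p * ((1 - p ^ i + p ^ (i + 1) + (1 - p ^ (i + 1))) / 2) - p * x ≥
          p * (p ^ i * g) / 2 := by
        have hx' : p * x ≤ p * (1 - p ^ i + p ^ (i + 1)) := by nlinarith
        have : p ^ (i + 1) = p ^ i * p := pow_succ p i
        nlinarith
      have habs : |p * ((1 - p ^ i + p ^ (i + 1) + (1 - p ^ (i + 1))) / 2) - p * x| ≥
          p * (p ^ i * g) / 2 := le_trans this (le_abs_self _)
      linarith [habs, hdist, hβle]
    · have : p * x - p * ((1 - p ^ i + p ^ (i + 1) + (1 - p ^ (i + 1))) / 2) ≥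
          p * (p ^ i * g) / 2 := by
        have hx' : p * (1 - p ^ (i + 1)) ≤ p * x := by nlinarith
        have : p ^ (i + 1) = p ^ i * p := pow_succ p i
        nlinarith
      have habs : |p * ((1 - p ^ i + p ^ (i + 1) + (1 - p ^ (i + 1))) / 2) - p * x| ≥
          p * (p ^ i * g) / 2 := by
        rw [abs_sub_comm]; exact le_trans this (le_abs_self _)
      linarith [habs, hdist, hβle]
  -- choose u
  refine ⟨Real.sqrt ((g / 2) ^ 2 + β ^ 2), ?_, ?_⟩
  · exact (Real.lt_sqrt (by positivity)).mpr (by nlinarith)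
  · intro ε hε
    obtain ⟨hε1, hε2⟩ := hε
    have hε0 : 0 ≤ ε := le_trans (by positivity) hε1.le
    have hεsq : ε ^ 2 < (g / 2) ^ 2 + β ^ 2 := (Real.lt_sqrt hε0).mp hε2
    have hdist₁ : ∀ c : ℝ, dist (mk2 (1 / 2) (p * c)) (cantorS₁ p (mk2 1 c)) = g / 2 := by
      intro c
      rw [dist_mk2, hS₁0, hS₁1, mk2_apply0, mk2_apply1, mk2_apply0, mk2_apply1]
      have e1 : (1 : ℝ) / 2 - p * 1 = g / 2 := by rw [hgdef]; ring
      have e2 : p * c - p * c = 0 := by ring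
      rw [e1, e2]
      rw [show (g / 2) ^ 2 + (0 : ℝ) ^ 2 = (g / 2) ^ 2 by ring]
      exact Real.sqrt_sq (by positivity)
    have hdist₂ : ∀ c : ℝ, dist (mk2 (1 / 2) (p * c)) (cantorS₂ p (mk2 0 c)) = g / 2 := by
      intro c
      rw [dist_mk2, hS₂0, hS₂1, mk2_apply0, mk2_apply1, mk2_apply0, mk2_apply1]
      have e1 : (1 : ℝ) / 2 - (p * 0 + (1 - p)) = -(g / 2) := by rw [hgdef]; ring
      have e2 : p * c - p * c = 0 := by ring
      rw [e1, e2]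
      rw [show (-(g / 2)) ^ 2 + (0 : ℝ) ^ 2 = (g / 2) ^ 2 by ring]
      exact Real.sqrt_sq (by positivity)
    have hmemT : ∀ i : Fin n,
        mk2 (1 / 2) (p * (1 - p ^ (i : ℕ))) ∈ cthickening ε A₁ ∩ cthickening ε A₂ := by
      intro i
      have hc : 1 - p ^ (i : ℕ) ∈ C := cantor_pts ⟨hp0, hp2⟩ hCne hCcpt hC i
      have hvF : mk2 1 (1 - p ^ (i : ℕ)) ∈ cantorSquare C := ⟨h1C, hc⟩
      have hvF' : mk2 0 (1 - p ^ (i : ℕ)) ∈ cantorSquare C := ⟨h0C, hc⟩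
      constructor
      · exact mem_cthickening_of_dist_le _ _ ε _ (mem_image_of_mem _ hvF)
          (by rw [hdist₁]; exact hε1.le)
      · exact mem_cthickening_of_dist_le _ _ ε _ (mem_image_of_mem _ hvF')
          (by rw [hdist₂]; exact hε1.le)
    refine ⟨fun i => mk2 (1 / 2) (p * (1 - p ^ (i : ℕ))), fun i => hmemT i, ?_⟩
    -- separation
    set T : Set (EuclideanSpace ℝ (Fin 2)) := cthickening ε A₁ ∩ cthickening ε A₂ with hT
    have claim : ∀ i j : Fin n, (i : ℕ) < (j : ℕ) →
        connectedComponentIn T (mk2 (1 / 2) (p * (1 - p ^ (i : ℕ)))) ≠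
        connectedComponentIn T (mk2 (1 / 2) (p * (1 - p ^ (j : ℕ)))) := by
      intro i j hij heq
      have hiK : mk2 (1 / 2) (p * (1 - p ^ (i : ℕ))) ∈
          connectedComponentIn T (mk2 (1 / 2) (p * (1 - p ^ (i : ℕ)))) :=
        mem_connectedComponentIn (hmemT i)
      have hjK : mk2 (1 / 2) (p * (1 - p ^ (j : ℕ))) ∈
          connectedComponentIn T (mk2 (1 / 2) (p * (1 - p ^ (i : ℕ)))) := by
        rw [heq]; exact mem_connectedComponentIn (hmemT j)
      set K := connectedComponentIn T (mk2 (1 / 2) (p * (1 - p ^ (i : ℕ)))) with hK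
      have hKT : K ⊆ T := connectedComponentIn_subset _ _
      have hKconn : IsPreconnected K := isPreconnected_connectedComponentIn
      have hImconn : IsPreconnected ((fun z : EuclideanSpace ℝ (Fin 2) => z 1) '' K) :=
        hKconn.image _ (PiLp.continuous_apply 2 (fun _ : Fin 2 => ℝ) 1).continuousOn
      set mid : ℝ := p * ((1 - p ^ (i : ℕ) + p ^ ((i : ℕ) + 1) +
        (1 - p ^ ((i : ℕ) + 1))) / 2) with hmid
      have hmid_mem : mid ∈ Set.Icc (p * (1 - p ^ (i : ℕ))) (p * (1 - p ^ (j : ℕ))) := by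
        constructor
        · rw [hmid]
          have : 0 < p ^ ((i : ℕ) + 1) := pow_pos hp0 _
          have hpig : 0 < p ^ (i : ℕ) * g := by positivity
          have e : p ^ ((i : ℕ) + 1) = p ^ (i : ℕ) * p := pow_succ p _
          nlinarith
        · rw [hmid]
          have hji : p ^ (j : ℕ) ≤ p ^ ((i : ℕ) + 1) :=
            pow_le_pow_of_le_one hp0.le (by linarith) hij
          have e : p ^ ((i : ℕ) + 1) = p ^ (i : ℕ) * p := pow_succ p _
          have hpi : (0:ℝ) < p ^ (i : ℕ) := pow_pos hp0 _
          have h1 : p * p ^ (j : ℕ) ≤ p * p ^ ((i : ℕ) + 1) :=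
            mul_le_mul_of_nonneg_left hji hp0.le
          have h2 : (0:ℝ) ≤ (1 / 2 - p) * (p * p ^ (i : ℕ)) := by
            apply mul_nonneg (by linarith) (by positivity)
          nlinarith [h1, h2, e]
      have hmid_im : mid ∈ (fun z : EuclideanSpace ℝ (Fin 2) => z 1) '' K := by
        apply hImconn.Icc_subset ⟨_, hiK, mk2_apply1 _ _⟩ ⟨_, hjK, mk2_apply1 _ _⟩
        exact hmid_mem
      obtain ⟨z, hzK, hz1⟩ := hmid_im
      have hzT : z ∈ T := hKT hzK
      have hup : infDist (z 1) D ^ 2 + (g / 2) ^ 2 ≤ ε ^ 2 := key ε hε0 z hzT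
      have hz1' : z 1 = mid := hz1
      have hlow : β ≤ infDist (z 1) D := by
        rw [hz1']; exact sep i i.isLt
      nlinarith [infDist_nonneg (x := z 1) (s := D)]
    intro i j hij
    rcases lt_or_gt_of_ne (fun h : (i : ℕ) = (j : ℕ) => hij (Fin.ext h)) with h | h
    · exact claim i j h
    · exact (claim j i h).symm
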